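/- arXiv:2509.15584 — 2 statements merged into one kernel-verified Lean document; each statement's English description precedes it below -/
import Mathlib

section
/- Polynomial-time-bounded simulation composes under the 'follows' condition: if T1 follows T2 via map M21 and T2 follows T3 via map M32 (where 'T follows T'' via M means: whenever A' macro-transitions to B' in T' with M(A') and M(B') both defined and M(A') ≠ M(B'), then M(A') single-step transitions to M(B') in T), then T1 follows T3 via the partial composition M31 = M21 ∘ M32 (defined where both are defined). -/
/-- A macro transition `A' ⇒ B'` relative to configuration map `M`: a finite transition
sequence from `A'` to `B'` where `M A'` and `M B'` are defined and each intermediate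
configuration maps to either `M A'` or `⊥`. -/
def Macro {σ τ : Type*} (step : σ → σ → Prop) (M : σ → Option τ) (A B : σ) : Prop :=
  ∃ (n : ℕ) (f : ℕ → σ), f 0 = A ∧ f n = B ∧ (∀ i < n, step (f i) (f (i + 1))) ∧
    (M A).isSome ∧ (M B).isSome ∧
    ∀ i, 0 < i → i < n → (M (f i) = M A ∨ M (f i) = none)

/-- `T follows T'` via `M`: whenever `A'` macro-transitions to `B'` in `T'` with `M A'` and
`M B'` both defined and distinct, `M A'` single-step transitions to `M B'` in `T`. -/
def Follows {σ τ : Type*} (stepT : τ → τ → Prop) (stepT' : σ → σ → Prop)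
    (M : σ → Option τ) : Prop :=
  ∀ (A' B' : σ) (a b : τ), Macro stepT' M A' B' → M A' = some a → M B' = some b →
    a ≠ b → stepT a b

private lemma follows_trans_key {C1 C2 C3 : Type*}
    (step2 : C2 → C2 → Prop) (step3 : C3 → C3 → Prop)
    (M21 : C2 → Option C1) (M32 : C3 → Option C2)
    (h32 : Follows step2 step3 M32) (a : C1) :
    ∀ n (f : ℕ → C3) (c0 cn : C2),
      (∀ i < n, step3 (f i) (f (i+1))) →
      (∀ i, 0 < i → i < n → ((M32 (f i)).bind M21 = some a ∨ (M32 (f i)).bind M21 = none)) →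
      M32 (f 0) = some c0 → M32 (f n) = some cn → M21 c0 = some a →
      Relation.ReflTransGen (fun x y => step2 x y ∧ (M21 x = some a ∨ M21 x = none)) c0 cn := by
  intro n
  induction n using Nat.strong_induction_on with
  | _ n IH =>
    intro f c0 cn hstep hmid h0 hn hc0
    rcases Nat.eq_zero_or_pos n with rfl | hnpos
    · rw [h0] at hn; cases hn; exact .refl
    · set m := Nat.findGreatest (fun i => (M32 (f i)).isSome) (n-1) with hm
      have hPm : (M32 (f m)).isSome := by
        rw [hm]
        exact Nat.findGreatest_spec (P := fun i => (M32 (f i)).isSome)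
          (Nat.zero_le _) (show (M32 (f 0)).isSome = true by rw [h0]; rfl)
      have hmle : m ≤ n - 1 := Nat.findGreatest_le _
      have hmlt : m < n := lt_of_le_of_lt hmle (Nat.sub_lt hnpos one_pos)
      obtain ⟨cm, hcm⟩ := Option.isSome_iff_exists.mp hPm
      have hmac : Macro step3 M32 (f m) (f n) := by
        refine ⟨n - m, fun i => f (m + i), rfl,
          show f (m + (n - m)) = f n by congr 1; omega, ?_, ?_, ?_, ?_⟩
        · intro i hi
          have := hstep (m + i) (by omega)
          simpa [Nat.add_assoc] using this
        · exact hPm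
        · rw [hn]; rfl
        · intro i h1 h2
          right
          have hno : ¬ ((M32 (f (m + i))).isSome = true) :=
            Nat.findGreatest_is_greatest (P := fun i => (M32 (f i)).isSome = true)
              (n := n - 1) (k := m + i) (by rw [← hm]; omega) (by omega)
          simpa [Option.not_isSome_iff_eq_none] using hno
      have hcond : M21 cm = some a ∨ M21 cm = none := by
        rcases Nat.eq_zero_or_pos m with heq | hmpos
        · rw [heq, h0] at hcm; cases hcm; exact Or.inl hc0
        · have := hmid m hmpos hmlt
          rwa [hcm, Option.bind_some] at this
      have hpre : Relation.ReflTransGen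
          (fun x y => step2 x y ∧ (M21 x = some a ∨ M21 x = none)) c0 cm :=
        IH m hmlt f c0 cm (fun i hi => hstep i (by omega))
          (fun i h1 h2 => hmid i h1 (by omega)) h0 hcm hc0
      by_cases hcc : cm = cn
      · exact hcc ▸ hpre
      · exact hpre.tail ⟨h32 (f m) (f n) cm cn hmac hcm hn hcc, hcond⟩

private lemma follows_trans_toPath {C1 C2 : Type*}
    (step2 : C2 → C2 → Prop) (M21 : C2 → Option C1) (a : C1) :
    ∀ x y : C2,
      Relation.ReflTransGen (fun x y => step2 x y ∧ (M21 x = some a ∨ M21 x = none)) x y →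
      ∃ (n : ℕ) (f : ℕ → C2), f 0 = x ∧ f n = y ∧ (∀ i < n, step2 (f i) (f (i+1))) ∧
        (∀ i < n, M21 (f i) = some a ∨ M21 (f i) = none) := by
  intro x y h
  induction h using Relation.ReflTransGen.head_induction_on with
  | refl => exact ⟨0, fun _ => y, rfl, rfl, by omega, by omega⟩
  | head hxz _ ih =>
    rename_i x' z' _
    obtain ⟨n, f, hf0, hfn, hstep, hcond⟩ := ih
    refine ⟨n + 1, fun i => if i = 0 then x' else f (i - 1), by simp, by simp [hfn], ?_, ?_⟩
    · intro i hi
      rcases Nat.eq_zero_or_pos i with rfl | hipos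
      · simpa [hf0] using hxz.1
      · have h1 : ¬ (i = 0) := by omega
        have h2 : ¬ (i + 1 = 0) := by omega
        simp only [h1, h2, if_false]
        have h3 : i + 1 - 1 = i - 1 + 1 := by omega
        rw [h3]
        exact hstep (i - 1) (by omega)
    · intro i hi
      rcases Nat.eq_zero_or_pos i with rfl | hipos
      · simpa using hxz.2
      · have h1 : ¬ (i = 0) := by omega
        simp only [h1, if_false]
        exact hcond (i - 1) (by omega)

/-- 'Follows' composes: if `T1` follows `T2` via `M21` and `T2` follows `T3` via `M32`,
then `T1` follows `T3` via the partial composition `M31 = M21 ∘ M32`. -/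
theorem follows_trans {C1 C2 C3 : Type*}
    (step1 : C1 → C1 → Prop) (step2 : C2 → C2 → Prop) (step3 : C3 → C3 → Prop)
    (M21 : C2 → Option C1) (M32 : C3 → Option C2)
    (h21 : Follows step1 step2 M21) (h32 : Follows step2 step3 M32) :
    Follows step1 step3 (fun c => (M32 c).bind M21) := by
  intro A' B' a b hmac hA hB hab
  simp only at hA hB
  obtain ⟨A2, hA2, hA2a⟩ : ∃ A2, M32 A' = some A2 ∧ M21 A2 = some a := by
    cases h : M32 A' with
    | none => rw [h] at hA; simp at hA
    | some c => exact ⟨c, rfl, by rw [h] at hA; simpa using hA⟩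
  obtain ⟨B2, hB2, hB2b⟩ : ∃ B2, M32 B' = some B2 ∧ M21 B2 = some b := by
    cases h : M32 B' with
    | none => rw [h] at hB; simp at hB
    | some c => exact ⟨c, rfl, by rw [h] at hB; simpa using hB⟩
  obtain ⟨n, f, hf0, hfn, hstep, -, -, hmid⟩ := hmac
  have hrtg := follows_trans_key step2 step3 M21 M32 h32 a n f A2 B2 hstep
    (fun i h1 h2 => by
      have := hmid i h1 h2
      simpa [hA] using this)
    (by rw [hf0]; exact hA2) (by rw [hfn]; exact hB2) hA2a
  obtain ⟨n', g, hg0, hgn, hstep', hcond'⟩ := follows_trans_toPath step2 M21 a A2 B2 hrtg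
  have hmac2 : Macro step2 M21 A2 B2 := by
    refine ⟨n', g, hg0, hgn, hstep', by simp [hA2a], by simp [hB2b], ?_⟩
    intro i h1 h2
    rcases hcond' i h2 with h | h
    · left; rw [h, hA2a]
    · right; exact h
  exact h21 A2 B2 a b hmac2 hA2a hB2b hab
end

section
/- In the register machine simulation by a k-Void-Genesis CRN, the increment instruction is faithfully simulated: if the configuration contains one copy of state species s_j with instruction inc(r_i, s_k) and the count of r_i is m ≥ 1 (so z_{r_i} is absent), then applying the rule s_j + r_i → s_k + 2·r_i yields a configuration with one copy of s_k and count m+1 of r_i; if instead m = 0 and one copy of z_{r_i} is present, applying s_j + z_{r_i} → s_k + r_i yields one copy of s_k and count 1 of r_i with z_{r_i} absent. -/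
abbrev Config (Λ : Type*) := Λ → ℕ

/-- In the k-VG CRN encoding of a register machine, the increment instruction
`s_j : inc(r_i, s_k)` (rules `s_j + r_i → s_k + 2 r_i` and `s_j + z_{r_i} → s_k + r_i`)
is faithfully simulated: if `C` has one `s_j`, `m ≥ 1` copies of `r_i`, no `z_{r_i}` and
no `s_k`, then the first rule applies and yields one `s_k` and `m + 1` copies of `r_i`;
if instead `D` has one `s_j`, zero `r_i`, one `z_{r_i}` and no `s_k`, the second rule
applies and yields one `s_k`, one `r_i`, and no `z_{r_i}`. -/
theorem kvg_inc_faithful {Λ : Type*} [Fintype Λ] [DecidableEq Λ]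
    (sj sk ri zri : Λ)
    (hjk : sj ≠ sk) (hjr : sj ≠ ri) (hjz : sj ≠ zri)
    (hkr : sk ≠ ri) (hkz : sk ≠ zri) (hrz : ri ≠ zri)
    (C D : Config Λ) (m : ℕ) (hm : 1 ≤ m) :
    (C sj = 1 → C ri = m → C zri = 0 → C sk = 0 →
      (Pi.single sj 1 + Pi.single ri 1 : Config Λ) ≤ C ∧
      (let C' := C - (Pi.single sj 1 + Pi.single ri 1)
        + (Pi.single sk 1 + 2 • Pi.single ri 1);
        C' sk = 1 ∧ C' ri = m + 1)) ∧
    (D sj = 1 → D ri = 0 → D zri = 1 → D sk = 0 →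
      (Pi.single sj 1 + Pi.single zri 1 : Config Λ) ≤ D ∧
      (let D' := D - (Pi.single sj 1 + Pi.single zri 1)
        + (Pi.single sk 1 + Pi.single ri 1);
        D' sk = 1 ∧ D' ri = 1 ∧ D' zri = 0)) := by
  constructor
  · intro h1 h2 h3 h4
    constructor
    · intro x
      by_cases hx : x = sj
      · subst hx; simp [Pi.single_apply, hjr, h1]
      · by_cases hx2 : x = ri
        · subst hx2
          simp [Pi.single_apply, (Ne.symm hjr), h2]; omega
        · simp [Pi.single_apply, Ne.symm hx, Ne.symm hx2]
    · constructor
      · simp [Pi.single_apply, hkr, Ne.symm hjk, h4]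
      · simp [Pi.single_apply, Ne.symm hjr, Ne.symm hkr, h2]; omega
  · intro h1 h2 h3 h4
    constructor
    · intro x
      by_cases hx : x = sj
      · subst hx; simp [Pi.single_apply, hjz, h1]
      · by_cases hx2 : x = zri
        · subst hx2; simp [Pi.single_apply, Ne.symm hjz, h3]
        · simp [Pi.single_apply, Ne.symm hx, Ne.symm hx2]
    · refine ⟨?_, ?_, ?_⟩
      · simp [Pi.single_apply, hkz, Ne.symm hjk, hkr, h4]
      · simp [Pi.single_apply, Ne.symm hjr, Ne.symm hrz, hkr, h2]
      · simp [Pi.single_apply, Ne.symm hjz, hkz, hrz, h3]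
end
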